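/- For an elementary abelian 2-group V and integer n > 0, the quotient R^n(V) := I(V)/I(V)^{n+1} satisfies 2^{n+1}·R^n(V) = 0, and for V = F_2 of rank one there is an isomorphism R^n(F_2) ≅ Z/2^n. -/

import Mathlib

/-- The augmentation map of the integral group ring `ℤ[V]`. -/
noncomputable def aug (V : Type) [AddCommGroup V] :
    AddMonoidAlgebra ℤ V →ₐ[ℤ] ℤ :=
  AddMonoidAlgebra.lift ℤ ℤ V 1

/-- The augmentation ideal `I(V)` of `ℤ[V]`. -/
noncomputable def augIdeal (V : Type) [AddCommGroup V] :
    Ideal (AddMonoidAlgebra ℤ V) :=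
  RingHom.ker (aug V).toRingHom

/-- The quotient `I(V)^m / I(V)^k` of powers of the augmentation ideal,
as a quotient of `ℤ`-modules. -/
noncomputable abbrev powQuot (V : Type) [AddCommGroup V] (m k : ℕ) : Type :=
  (Submodule.restrictScalars ℤ (augIdeal V ^ m)) ⧸
    (Submodule.comap (Submodule.restrictScalars ℤ (augIdeal V ^ m)).subtype
      (Submodule.restrictScalars ℤ (augIdeal V ^ k)))

section General

variable {V : Type} [AddCommGroup V]

lemma tau_mem' (v : V) :
    (AddMonoidAlgebra.single v 1 - 1 : AddMonoidAlgebra ℤ V) ∈ augIdeal V := by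
  simp [augIdeal, RingHom.mem_ker, aug]

lemma tau_sq' (v : V) (hv : v + v = 0) :
    (AddMonoidAlgebra.single v 1 - 1 : AddMonoidAlgebra ℤ V) * (AddMonoidAlgebra.single v 1 - 1)
      = -2 * (AddMonoidAlgebra.single v 1 - 1) := by
  have h : (AddMonoidAlgebra.single v 1 : AddMonoidAlgebra ℤ V) * AddMonoidAlgebra.single v 1
      = 1 := by
    rw [AddMonoidAlgebra.single_mul_single, hv, one_mul, AddMonoidAlgebra.one_def]
  linear_combination h

lemma aug_apply (x : AddMonoidAlgebra ℤ V) : aug V x = x.coeff.sum fun _ b => b := by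
  rw [aug, AddMonoidAlgebra.lift_apply]
  simp

lemma mem_span_tau' {x : AddMonoidAlgebra ℤ V} (hx : x ∈ augIdeal V) :
    x ∈ Submodule.span ℤ
      {y : AddMonoidAlgebra ℤ V | ∃ v : V, AddMonoidAlgebra.single v 1 - 1 = y} := by
  have h0 : x.coeff.sum (fun _ b => b) = 0 := by
    rw [← aug_apply]; exact hx
  have hdec : x = ∑ v ∈ x.coeff.support,
      (x.coeff v) • ((AddMonoidAlgebra.single v 1 : AddMonoidAlgebra ℤ V) - 1) := by
    have h1 : ∑ v ∈ x.coeff.support,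
        (x.coeff v) • (AddMonoidAlgebra.single v 1 : AddMonoidAlgebra ℤ V) = x := by
      conv_rhs => rw [← AddMonoidAlgebra.sum_coeff_single x]
      rw [Finsupp.sum]
      refine Finset.sum_congr rfl fun v _ => ?_
      rw [AddMonoidAlgebra.smul_single, smul_eq_mul, mul_one]
    simp only [smul_sub, Finset.sum_sub_distrib, h1, ← Finset.sum_smul]
    rw [Finsupp.sum] at h0
    rw [h0, zero_smul, sub_zero]
  rw [hdec]
  exact Submodule.sum_mem _ fun v _ =>
    Submodule.smul_mem _ _ (Submodule.subset_span ⟨v, rfl⟩)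

variable [Module (ZMod 2) V]

lemma add_self' (v : V) : v + v = 0 := by
  rw [← two_smul (ZMod 2) v, show (2 : ZMod 2) = 0 from rfl, zero_smul]

lemma two_mul_mem_sq {x : AddMonoidAlgebra ℤ V} (hx : x ∈ augIdeal V) :
    2 * x ∈ augIdeal V ^ 2 := by
  refine Submodule.span_induction ?_ ?_ ?_ ?_ (mem_span_tau' hx)
  · rintro y ⟨v, rfl⟩
    have h : (2 : AddMonoidAlgebra ℤ V) * (AddMonoidAlgebra.single v 1 - 1)
        = -((AddMonoidAlgebra.single v 1 - 1) * (AddMonoidAlgebra.single v 1 - 1)) := by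
      rw [tau_sq' v (add_self' v)]; ring
    rw [h, sq]
    exact neg_mem (Ideal.mul_mem_mul (tau_mem' v) (tau_mem' v))
  · simp
  · intro a b _ _ ha hb
    rw [mul_add]; exact add_mem ha hb
  · intro z a _ ha
    rw [mul_smul_comm, zsmul_eq_mul]
    exact Ideal.mul_mem_left _ _ ha

lemma two_mul_mem_pow (k : ℕ) {x : AddMonoidAlgebra ℤ V} (hx : x ∈ augIdeal V ^ (k + 1)) :
    2 * x ∈ augIdeal V ^ (k + 2) := by
  rw [pow_succ] at hx
  refine Submodule.mul_induction_on hx ?_ ?_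
  · intro a ha b hb
    have h : 2 * (a * b) = a * (2 * b) := by ring
    rw [h, show k + 2 = k + 1 + 1 from rfl, pow_succ, pow_succ, mul_assoc]
    exact Ideal.mul_mem_mul ha (by rw [← sq]; exact two_mul_mem_sq hb)
  · intro a b ha hb
    rw [mul_add]; exact add_mem ha hb

lemma two_pow_mul_mem (n : ℕ) {x : AddMonoidAlgebra ℤ V} (hx : x ∈ augIdeal V) :
    2 ^ n * x ∈ augIdeal V ^ (n + 1) := by
  induction n with
  | zero => simpa using hx
  | succ m ih =>
    have h : (2 : AddMonoidAlgebra ℤ V) ^ (m + 1) * x = 2 * (2 ^ m * x) := by ring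
    rw [h]
    exact two_mul_mem_pow m ih

lemma part1 (n : ℕ) (x : powQuot V 1 (n + 1)) : ((2 : ℤ) ^ (n + 1)) • x = 0 := by
  obtain ⟨y, rfl⟩ := Submodule.Quotient.mk_surjective _ x
  rw [← Submodule.Quotient.mk_smul, Submodule.Quotient.mk_eq_zero]
  simp only [Submodule.mem_comap, Submodule.subtype_apply, Submodule.restrictScalars_mem]
  have hy : (y : AddMonoidAlgebra ℤ V) ∈ augIdeal V := by
    have := y.2
    simpa using this
  have h1 : (((2 : ℤ) ^ (n + 1)) • y : AddMonoidAlgebra ℤ V)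
      = 2 ^ (n + 1) * (y : AddMonoidAlgebra ℤ V) := by
    rw [zsmul_eq_mul]
    push_cast
    ring
  rw [SetLike.val_smul, h1,
    show (2 : AddMonoidAlgebra ℤ V) ^ (n + 1) * ↑y = 2 * (2 ^ n * ↑y) from by ring]
  exact Ideal.mul_mem_left _ _ (two_pow_mul_mem n hy)

end General

section RankOne

/-- The generator `τ = [1] - [0]` of the augmentation ideal of `ℤ[𝔽₂]`. -/
noncomputable def τ : AddMonoidAlgebra ℤ (ZMod 2) := AddMonoidAlgebra.single 1 1 - 1

lemma decomp (x : AddMonoidAlgebra ℤ (ZMod 2)) :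
    x = AddMonoidAlgebra.single 0 (x.coeff 0) + AddMonoidAlgebra.single 1 (x.coeff 1) := by
  apply AddMonoidAlgebra.ext
  ext a
  rw [AddMonoidAlgebra.coeff_add, Finsupp.add_apply, AddMonoidAlgebra.coeff_single,
    AddMonoidAlgebra.coeff_single]
  have h : a = 0 ∨ a = 1 := by revert a; decide
  rcases h with rfl | rfl
  · rw [Finsupp.single_eq_same, Finsupp.single_eq_of_ne (by decide), add_zero]
  · rw [Finsupp.single_eq_same, Finsupp.single_eq_of_ne (by decide), zero_add]

lemma aug_apply2 (x : AddMonoidAlgebra ℤ (ZMod 2)) : aug (ZMod 2) x = x.coeff 0 + x.coeff 1 := by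
  conv_lhs => rw [decomp x]
  simp [aug]

lemma mem_aug_iff (x : AddMonoidAlgebra ℤ (ZMod 2)) :
    x ∈ augIdeal (ZMod 2) ↔ x.coeff 0 + x.coeff 1 = 0 := by
  rw [augIdeal, RingHom.mem_ker, ← aug_apply2]; rfl

lemma eq_smul_tau {x : AddMonoidAlgebra ℤ (ZMod 2)} (hx : x ∈ augIdeal (ZMod 2)) :
    x = (x.coeff 1) • τ := by
  rw [mem_aug_iff] at hx
  have h0 : x.coeff 0 = -(x.coeff 1) := by linarith
  simp only [τ, smul_sub, AddMonoidAlgebra.one_def, AddMonoidAlgebra.smul_single, smul_eq_mul, mul_one]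
  conv_lhs => rw [decomp x]
  rw [h0]
  ext a
  simp [AddMonoidAlgebra.coeff_add, AddMonoidAlgebra.coeff_sub, AddMonoidAlgebra.coeff_single,
    Finsupp.add_apply, Finsupp.sub_apply, Finsupp.single_apply]
  ring_nf

lemma augIdeal_eq_span : augIdeal (ZMod 2) = Ideal.span {τ} := by
  apply le_antisymm
  · intro x hx
    rw [eq_smul_tau hx, zsmul_eq_mul]
    exact Ideal.mul_mem_left _ _ (Ideal.subset_span rfl)
  · rw [Ideal.span_le, Set.singleton_subset_iff]
    exact tau_mem' (1 : ZMod 2)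

lemma tau_sq2 : τ * τ = -2 * τ := tau_sq' (1 : ZMod 2) (by decide)

lemma augIdeal_pow (k : ℕ) :
    augIdeal (ZMod 2) ^ (k + 1) = Ideal.span {(2 : AddMonoidAlgebra ℤ (ZMod 2)) ^ k * τ} := by
  induction k with
  | zero => rw [pow_one, pow_zero, one_mul, augIdeal_eq_span]
  | succ m ih =>
    rw [pow_succ, ih, augIdeal_eq_span, Ideal.span_singleton_mul_span_singleton,
      show (2 : AddMonoidAlgebra ℤ (ZMod 2)) ^ m * τ * τ = -(2 ^ (m + 1) * τ) from by
        linear_combination (2 : AddMonoidAlgebra ℤ (ZMod 2)) ^ m * tau_sq2,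
      Ideal.span_singleton_neg]

lemma tau_coeff : τ.coeff 1 = 1 := by
  rw [τ, AddMonoidAlgebra.one_def]
  show (Finsupp.single (1 : ZMod 2) (1 : ℤ)) 1 - (Finsupp.single (0 : ZMod 2) (1 : ℤ)) 1 = 1
  rw [Finsupp.single_eq_same, Finsupp.single_eq_of_ne (by decide), sub_zero]

lemma smul_coeff (z : ℤ) (y : AddMonoidAlgebra ℤ (ZMod 2)) : (z • y).coeff 1 = z * y.coeff 1 := rfl

lemma mem_pow_iff (n : ℕ) {x : AddMonoidAlgebra ℤ (ZMod 2)} (hx : x ∈ augIdeal (ZMod 2)) :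
    x ∈ augIdeal (ZMod 2) ^ (n + 1) ↔ (2 : ℤ) ^ n ∣ x.coeff 1 := by
  rw [augIdeal_pow, Ideal.mem_span_singleton]
  constructor
  · rintro ⟨r, hr⟩
    have hrt : r * τ ∈ augIdeal (ZMod 2) :=
      Ideal.mul_mem_left _ _ (augIdeal_eq_span ▸ Ideal.subset_span rfl)
    have h2 : (2 : AddMonoidAlgebra ℤ (ZMod 2)) ^ n * τ = ((2 : ℤ) ^ n) • τ := by
      rw [zsmul_eq_mul]; push_cast; ring
    set c := (r * τ).coeff 1 with hc
    have hrc : r * τ = c • τ := eq_smul_tau hrt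
    have hx2 : x = ((c * 2 ^ n : ℤ)) • τ := by
      rw [hr, show (2 : AddMonoidAlgebra ℤ (ZMod 2)) ^ n * τ * r = 2 ^ n * (r * τ) from by ring,
        hrc, mul_smul_comm, h2, smul_smul]
    rw [hx2, smul_coeff, tau_coeff, mul_one]
    exact ⟨c, mul_comm _ _⟩
  · rintro ⟨m, hm⟩
    refine ⟨(m : AddMonoidAlgebra ℤ (ZMod 2)), ?_⟩
    rw [eq_smul_tau hx, hm, zsmul_eq_mul]
    push_cast
    ring

/-- The coefficient of `[1]`, as a `ℤ`-linear map on `ℤ[𝔽₂]`. -/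
noncomputable def coeffOne : AddMonoidAlgebra ℤ (ZMod 2) →ₗ[ℤ] ℤ where
  toFun x := x.coeff 1
  map_add' _ _ := rfl
  map_smul' _ _ := rfl

/-- The map `I(𝔽₂) → ℤ/2^n` sending `x` to the class of its coefficient at `[1]`. -/
noncomputable def toZMod (n : ℕ) :
    (Submodule.restrictScalars ℤ
      ((augIdeal (ZMod 2) ^ 1 : Ideal (AddMonoidAlgebra ℤ (ZMod 2))))) →ₗ[ℤ] ZMod (2 ^ n) :=
  (Int.castAddHom (ZMod (2 ^ n))).toIntLinearMap ∘ₗ coeffOne ∘ₗ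
    (Submodule.restrictScalars ℤ
      ((augIdeal (ZMod 2) ^ 1 : Ideal (AddMonoidAlgebra ℤ (ZMod 2))))).subtype

lemma ker_toZMod (n : ℕ) :
    LinearMap.ker (toZMod n) =
      Submodule.comap (Submodule.restrictScalars ℤ
          ((augIdeal (ZMod 2) ^ 1 : Ideal (AddMonoidAlgebra ℤ (ZMod 2))))).subtype
        (Submodule.restrictScalars ℤ
          ((augIdeal (ZMod 2) ^ (n + 1) : Ideal (AddMonoidAlgebra ℤ (ZMod 2))))) := by
  ext y
  have hy : (y : AddMonoidAlgebra ℤ (ZMod 2)) ∈ augIdeal (ZMod 2) := by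
    have := y.2; simpa using this
  simp only [LinearMap.mem_ker, Submodule.mem_comap, Submodule.subtype_apply,
    Submodule.restrictScalars_mem, toZMod, LinearMap.coe_comp, Function.comp_apply,
    AddMonoidHom.coe_toIntLinearMap, Int.coe_castAddHom]
  rw [mem_pow_iff n hy, ZMod.intCast_zmod_eq_zero_iff_dvd]
  have hco : coeffOne (y : AddMonoidAlgebra ℤ (ZMod 2)) = (y : AddMonoidAlgebra ℤ (ZMod 2)).coeff 1 :=
    rfl
  rw [hco]
  push_cast
  rfl

lemma toZMod_surjective (n : ℕ) : Function.Surjective (toZMod n) := by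
  intro c
  obtain ⟨z, rfl⟩ := ZMod.intCast_surjective c
  have hτ : τ ∈ Submodule.restrictScalars ℤ
      ((augIdeal (ZMod 2) ^ 1 : Ideal (AddMonoidAlgebra ℤ (ZMod 2)))) := by
    simpa using (augIdeal_eq_span ▸ Ideal.subset_span rfl : τ ∈ augIdeal (ZMod 2))
  refine ⟨z • ⟨τ, hτ⟩, ?_⟩
  rw [map_smul]
  have h : toZMod n ⟨τ, hτ⟩ = 1 := by
    show ((τ.coeff 1 : ℤ) : ZMod (2 ^ n)) = 1
    rw [tau_coeff, Int.cast_one]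
  rw [h, zsmul_eq_mul, mul_one]

set_option maxHeartbeats 1000000 in
/-- The isomorphism `R^n(𝔽₂) ≃ ℤ/2^n`. -/
noncomputable def equivZMod (n : ℕ) :
    ((Submodule.restrictScalars ℤ
        ((augIdeal (ZMod 2) ^ 1 : Ideal (AddMonoidAlgebra ℤ (ZMod 2))))) ⧸
      (Submodule.comap (Submodule.restrictScalars ℤ
          ((augIdeal (ZMod 2) ^ 1 : Ideal (AddMonoidAlgebra ℤ (ZMod 2))))).subtype
        (Submodule.restrictScalars ℤ
          ((augIdeal (ZMod 2) ^ (n + 1) : Ideal (AddMonoidAlgebra ℤ (ZMod 2)))))))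
      ≃+ ZMod (2 ^ n) :=
  ((Submodule.quotEquivOfEq _ _ (ker_toZMod n).symm).trans
    ((toZMod n).quotKerEquivOfSurjective (toZMod_surjective n))).toAddEquiv

end RankOne

/-- For an elementary abelian 2-group `V` and `n > 0`, the quotient
`R^n(V) = I(V)/I(V)^(n+1)` is annihilated by `2^(n+1)`, and for `V = 𝔽₂` of rank one
there is an isomorphism `R^n(𝔽₂) ≅ ℤ/2^n`. -/
theorem stmt4 (V : Type) [AddCommGroup V] [Module (ZMod 2) V] (n : ℕ) (hn : 0 < n) :
    (∀ x : powQuot V 1 (n + 1), ((2 : ℤ) ^ (n + 1)) • x = 0) ∧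
    Nonempty (powQuot (ZMod 2) 1 (n + 1) ≃+ ZMod (2 ^ n)) := by
  exact ⟨part1 n, ⟨equivZMod n⟩⟩
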